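/- Let M > 0 and σ < 0 be real numbers. There is no differentiable function s : [0,T) → ℝ with T > -2σ/√M such that s'(t) ≤ -(1/2) s(t)² + (1/2) M for all t ∈ [0,T) and s(0) ≤ √M · coth(σ). In other words, any differentiable solution of the differential inequality s' ≤ -s²/2 + M/2 with initial value s(0) ≤ √M coth(σ) ceases to exist (blows up to -∞) no later than time t* = -2σ/√M. -/

import Mathlib

open Set

/-- Hyperbolic cotangent. -/
noncomputable def coth (x : ℝ) : ℝ := Real.cosh x / Real.sinh x

lemma sinh_neg_of_neg {x : ℝ} (hx : x < 0) : Real.sinh x < 0 :=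
  Real.sinh_neg_iff.mpr hx

lemma coth_lt_neg_one {x : ℝ} (hx : x < 0) : coth x < -1 := by
  have hs := sinh_neg_of_neg hx
  rw [coth, div_lt_iff_of_neg hs]
  have := Real.cosh_add_sinh x
  have := Real.exp_pos x
  linarith

lemma sinh_gt_mul_cosh {x : ℝ} (hx : x < 0) : x * Real.cosh x < Real.sinh x := by
  have h : ∀ y : ℝ, 0 < y → Real.sinh y < y * Real.cosh y := by
    intro y hy
    have hmono : StrictMonoOn (fun z => z * Real.cosh z - Real.sinh z) (Set.Ici (0:ℝ)) := by
      apply strictMonoOn_of_deriv_pos (convex_Ici 0)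
      · fun_prop
      · intro z hz
        rw [interior_Ici] at hz
        have : HasDerivAt (fun z => z * Real.cosh z - Real.sinh z)
            (1 * Real.cosh z + z * Real.sinh z - Real.cosh z) z := by
          exact ((hasDerivAt_id z).mul (Real.hasDerivAt_cosh z)).sub (Real.hasDerivAt_sinh z)
        rw [this.deriv]
        have h2 := mul_pos hz (Real.sinh_pos_iff.mpr hz)
        linarith
    have := hmono (Set.self_mem_Ici) (Set.mem_Ici.mpr hy.le) hy
    simpa using this
  have := h (-x) (neg_pos.mpr hx)
  rw [Real.sinh_neg, Real.cosh_neg] at this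
  linarith

lemma coth_lt_one_div {x : ℝ} (hx : x < 0) : coth x < 1 / x := by
  have hs := sinh_neg_of_neg hx
  have hd : 0 < x * Real.sinh x := mul_pos_of_neg_of_neg hx hs
  have h := sinh_gt_mul_cosh hx
  have key : 1/x - coth x = (Real.sinh x - x * Real.cosh x)/(x * Real.sinh x) := by
    simp only [coth]
    field_simp [hx.ne, hs.ne]
  have : 0 < 1/x - coth x := by
    rw [key]; exact div_pos (by linarith) hd
  linarith

lemma hasDerivAt_coth {x : ℝ} (hx : x < 0) :
    HasDerivAt coth (1 - coth x ^ 2) x := by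
  have hs := (sinh_neg_of_neg hx).ne
  have h := (Real.hasDerivAt_cosh x).div (Real.hasDerivAt_sinh x) hs
  rw [show coth = Real.cosh / Real.sinh from rfl]
  refine h.congr_deriv ?_
  symm
  have h1 := Real.cosh_sq_sub_sinh_sq x
  have hs2 : Real.sinh x ≠ 0 := (sinh_neg_of_neg hx).ne
  simp only [Pi.div_apply]
  field_simp [coth]


set_option maxHeartbeats 1000000 in
/-- Finite-time wave breaking (steepening lemma blow-up): no differentiable
solution of the differential inequality `s' ≤ -s²/2 + M/2` with initial value
`s 0 ≤ √M coth σ` (with `σ < 0`) can exist on `[0, T)` for `T > -2σ/√M`. -/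
theorem no_global_solution_of_riccati_inequality
    (M σ : ℝ) (hM : 0 < M) (hσ : σ < 0) :
    ¬ ∃ (T : ℝ) (s s' : ℝ → ℝ),
      T > -2 * σ / Real.sqrt M ∧
      (∀ t ∈ Set.Ico (0 : ℝ) T, HasDerivWithinAt s (s' t) (Set.Ico 0 T) t) ∧
      (∀ t ∈ Set.Ico (0 : ℝ) T, s' t ≤ -(1/2) * (s t)^2 + (1/2) * M) ∧
      s 0 ≤ Real.sqrt M * coth σ := by
  rintro ⟨T, s, s', hT, hderiv, hineq, hinit⟩
  set q := Real.sqrt M with hq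
  have hq0 : 0 < q := Real.sqrt_pos.mpr hM
  have hqsq : q ^ 2 = M := Real.sq_sqrt hM.le
  have hT0 : 0 < T := lt_trans (div_pos (by linarith) hq0) hT
  have hσT : -σ / T < q / 2 := by
    rw [div_lt_iff₀ hT0]
    rw [gt_iff_lt, div_lt_iff₀ hq0] at hT
    nlinarith
  have hσT0 : 0 < -σ / T := div_pos (neg_pos.mpr hσ) hT0
  set c := (q / 2 + -σ / T) / 2 with hc
  have hc0 : 0 < c := by positivity
  have hc1 : c < q / 2 := by rw [hc]; linarith
  have hc2 : -σ / T < c := by rw [hc]; linarith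
  set K := -σ / c with hK
  have hK0 : 0 < K := div_pos (neg_pos.mpr hσ) hc0
  have hKT : K < T := by
    rw [hK, div_lt_iff₀ hc0]
    rw [div_lt_iff₀ hT0] at hc2
    nlinarith
  set u : ℝ → ℝ := fun t => σ + c * t with hu
  have huneg : ∀ t, t < K → u t < 0 := by
    intro t ht
    rw [hK, lt_div_iff₀ hc0] at ht
    simp only [hu]; nlinarith
  set B : ℝ → ℝ := fun t => q * coth (u t) with hB
  set B' : ℝ → ℝ := fun t => q * c * (1 - coth (u t) ^ 2) with hB'
  have hBd : ∀ t, u t < 0 → HasDerivAt B (B' t) t := by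
    intro t ht
    have h1 : HasDerivAt u c t := by
      simpa [hu] using ((hasDerivAt_id t).const_mul c).const_add σ
    have h2 := (hasDerivAt_coth ht).comp t h1
    have h3 := h2.const_mul q
    simp only [hB, hB']
    exact h3.congr_deriv (by ring)
  -- minimum of s on Icc 0 K
  have hsub : Icc (0:ℝ) K ⊆ Ico 0 T := fun x hx => ⟨hx.1, lt_of_le_of_lt hx.2 hKT⟩
  have hscont : ContinuousOn s (Icc 0 K) := fun x hx =>
    ((hderiv x (hsub hx)).continuousWithinAt).mono hsub
  obtain ⟨tm, htm, hmin⟩ := isCompact_Icc.exists_isMinOn (nonempty_Icc.mpr hK0.le) hscont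
  set m := min (s tm) 0 - 1 with hm
  have hm0 : m < 0 := by
    have := min_le_right (s tm) 0; rw [hm]; linarith
  have hmlt : m < s tm := by
    have := min_le_left (s tm) 0; rw [hm]; linarith
  -- choose u₀ and t₀
  set u₀ := max (σ / 2) (q / m) with hu₀
  have hu₀neg : u₀ < 0 := max_lt (by linarith) (div_neg_of_pos_of_neg hq0 hm0)
  have hu₀σ : σ < u₀ := lt_of_lt_of_le (by linarith) (le_max_left _ _)
  set t₀ := (u₀ - σ) / c with ht₀
  have ht₀0 : 0 < t₀ := div_pos (by linarith) hc0
  have ht₀K : t₀ < K := by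
    rw [ht₀, hK]; exact (div_lt_div_iff_of_pos_right hc0).mpr (by linarith)
  have hut₀ : u t₀ = u₀ := by
    simp only [hu, ht₀]; field_simp; ring
  -- comparison on [0, t₀]
  have hsubt : Icc (0:ℝ) t₀ ⊆ Icc 0 K := Icc_subset_Icc le_rfl ht₀K.le
  have hcomp : ∀ x ∈ Icc (0:ℝ) t₀, s x ≤ B x := by
    refine image_le_of_deriv_right_lt_deriv_boundary' (f' := s') (B' := B')
      (hscont.mono hsubt) ?_ ?_ ?_ ?_ ?_
    · intro x hx
      have hxT : x ∈ Ico (0:ℝ) T := hsub (hsubt ⟨hx.1, hx.2.le⟩)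
      refine (hderiv x hxT).mono_of_mem_nhdsWithin ?_
      have hmem : Ici x ∩ Iio T ∈ nhdsWithin x (Ici x) :=
        inter_mem_nhdsWithin _ (Iio_mem_nhds hxT.2)
      refine Filter.mem_of_superset hmem ?_
      intro y hy
      exact ⟨le_trans hx.1 hy.1, hy.2⟩
    · have hu0 : u 0 = σ := by simp [hu]
      show s 0 ≤ q * coth (u 0)
      rw [hu0]; exact hinit
    · intro x hx
      have hux : u x < 0 := huneg x (lt_of_le_of_lt hx.2 ht₀K)
      exact ((hBd x hux).continuousAt).continuousWithinAt
    · intro x hx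
      have hux : u x < 0 := huneg x (lt_trans hx.2 ht₀K)
      exact (hBd x hux).hasDerivWithinAt
    · intro x hx heq
      have hux : u x < 0 := huneg x (lt_trans hx.2 ht₀K)
      have hxT : x ∈ Ico (0:ℝ) T := hsub ⟨hx.1, le_trans hx.2.le ht₀K.le⟩
      have hle := hineq x hxT
      rw [heq] at hle
      set w := coth (u x) with hw
      have hw1 : w < -1 := coth_lt_neg_one hux
      have hBx : B x = q * w := rfl
      have hB'x : B' x = q * c * (1 - w ^ 2) := rfl
      have h1w : 1 - w ^ 2 < 0 := by nlinarith
      have hqc : q * c < q ^ 2 / 2 := by nlinarith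
      have : q ^ 2 / 2 * (1 - w ^ 2) < q * c * (1 - w ^ 2) :=
        mul_lt_mul_of_neg_right hqc h1w
      rw [hB'x]
      rw [hBx] at hle
      nlinarith
  -- contradiction
  have hst₀ : s t₀ ≤ B t₀ := hcomp t₀ ⟨ht₀0.le, le_rfl⟩
  have hBt₀ : B t₀ < m := by
    have h1 : coth u₀ < 1 / u₀ := coth_lt_one_div hu₀neg
    have h2 : B t₀ < q * (1 / u₀) := by
      rw [hB]; simp only [hut₀]
      exact mul_lt_mul_of_pos_left h1 hq0
    have h3 : q * (1 / u₀) ≤ m := by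
      have hqm : q / m ≤ u₀ := le_max_right _ _
      rw [mul_one_div, div_le_iff_of_neg hu₀neg]
      have h4 : m * u₀ ≤ m * (q / m) := mul_le_mul_of_nonpos_left hqm hm0.le
      have h5 : m * (q / m) = q := by
        rw [mul_comm]; exact div_mul_cancel₀ q hm0.ne
      exact h5 ▸ h4
    linarith
  have hmt₀ : m < s t₀ := lt_of_lt_of_le hmlt (hmin ⟨ht₀0.le, ht₀K.le⟩)
  linarith
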